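/- Let p be a prime number and let ℤ_p denote the ring of p-adic integers. Let P be a finitely generated free ℤ_p-module, f : P → P a ℤ_p-linear map, and Q an arbitrary ℤ_p-module. Let N be a natural number such that p^N annihilates the torsion submodule of the cokernel P / f(P). Then for every element κ of the kernel of the induced map f ⊗ id_Q : P ⊗_{ℤ_p} Q → P ⊗_{ℤ_p} Q, the element p^N · κ lies in the image of the natural map (ker f) ⊗_{ℤ_p} Q → P ⊗_{ℤ_p} Q. -/

import Mathlib

open TensorProduct

/-- Let `p` be a prime and `ℤ_p` the ring of `p`-adic integers.  Let `P` be a finitely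
generated free `ℤ_p`-module, `f : P → P` a `ℤ_p`-linear map, and `Q` an arbitrary
`ℤ_p`-module.  Let `N` be a natural number such that `p^N` annihilates the torsion
submodule of the cokernel `P / f(P)`.  Then for every element `κ` of the kernel of the
induced map `f ⊗ id_Q : P ⊗_{ℤ_p} Q → P ⊗_{ℤ_p} Q`, the element `p^N · κ` lies in the
image of the natural map `(ker f) ⊗_{ℤ_p} Q → P ⊗_{ℤ_p} Q`. -/
theorem pow_smul_mem_range_of_mem_ker_rTensor
    (p : ℕ) [Fact p.Prime]
    (P : Type*) [AddCommGroup P] [Module ℤ_[p] P]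
    [Module.Free ℤ_[p] P] [Module.Finite ℤ_[p] P]
    (Q : Type*) [AddCommGroup Q] [Module ℤ_[p] Q]
    (f : P →ₗ[ℤ_[p]] P) (N : ℕ)
    (hN : ∀ x ∈ Submodule.torsion ℤ_[p] (P ⧸ LinearMap.range f),
      (p : ℤ_[p]) ^ N • x = 0)
    (κ : P ⊗[ℤ_[p]] Q) (hκ : LinearMap.rTensor Q f κ = 0) :
    (p : ℤ_[p]) ^ N • κ ∈
      LinearMap.range (LinearMap.rTensor Q (LinearMap.ker f).subtype) := by
  classical
  set I : Submodule ℤ_[p] P := LinearMap.range f with hIdef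
  -- the saturation of `I` in `P`
  set I' : Submodule ℤ_[p] P :=
    Submodule.comap I.mkQ (Submodule.torsion ℤ_[p] (P ⧸ I)) with hI'def
  have hII' : I ≤ I' := by
    intro x hx
    simp only [hI'def, Submodule.mem_comap, Submodule.mkQ_apply]
    rw [(Submodule.Quotient.mk_eq_zero I).mpr hx]
    exact Submodule.zero_mem _
  -- `P ⧸ I'` is torsion-free
  have htf : NoZeroSMulDivisors ℤ_[p] (P ⧸ I') := by
    constructor
    intro c x hcx
    by_cases hc : c = 0
    · exact Or.inl hc
    · refine Or.inr ?_
      obtain ⟨y, rfl⟩ := Submodule.mkQ_surjective I' x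
      have hcy : c • y ∈ I' := by
        rwa [← map_smul, Submodule.mkQ_apply, Submodule.Quotient.mk_eq_zero] at hcx
      have hcy' : c • I.mkQ y ∈ Submodule.torsion ℤ_[p] (P ⧸ I) := by
        rw [← map_smul]; exact hcy
      obtain ⟨a, ha⟩ := (Submodule.mem_torsion_iff _).mp hcy'
      have hy : y ∈ I' := by
        refine (Submodule.mem_torsion_iff _).mpr
          ⟨⟨(a : ℤ_[p]) * c, mul_mem a.2 (mem_nonZeroDivisors_of_ne_zero hc)⟩, ?_⟩
        simpa [mul_smul, Submonoid.smul_def] using ha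
      simpa [Submodule.Quotient.mk_eq_zero] using hy
  -- hence `P ⧸ I'` is free, hence projective, so `I'` is a direct summand
  have : Module.Free ℤ_[p] (P ⧸ I') := Module.free_of_finite_type_torsion_free'
  obtain ⟨s, hs⟩ := Module.projective_lifting_property I'.mkQ
    (LinearMap.id : (P ⧸ I') →ₗ[ℤ_[p]] (P ⧸ I')) (Submodule.mkQ_surjective I')
  -- a retraction `r : P → I'`
  have hker : ∀ x : P, x - s (I'.mkQ x) ∈ I' := by
    intro x
    rw [← Submodule.Quotient.mk_eq_zero I']
    have : I'.mkQ (s (I'.mkQ x)) = I'.mkQ x := by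
      have := LinearMap.congr_fun hs (I'.mkQ x)
      simpa using this
    simp only [Submodule.mkQ_apply] at this ⊢
    rw [Submodule.Quotient.mk_sub, this, sub_self]
  set r : P →ₗ[ℤ_[p]] I' :=
    LinearMap.codRestrict I' (LinearMap.id - s ∘ₗ I'.mkQ) (fun x => hker x) with hrdef
  have hr : r ∘ₗ I'.subtype = LinearMap.id := by
    ext x
    have hx0 : I'.mkQ (x : P) = 0 := (Submodule.Quotient.mk_eq_zero I').mpr x.2
    simp only [hrdef, LinearMap.coe_comp, Function.comp_apply, Submodule.coe_subtype,
      LinearMap.codRestrict_apply, LinearMap.sub_apply, LinearMap.id_apply, hx0, map_zero,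
      sub_zero, LinearMap.id_coe, id_eq]
  -- `rTensor Q I'.subtype` is injective
  have hinj : Function.Injective (LinearMap.rTensor Q I'.subtype) := by
    have : LinearMap.rTensor Q r ∘ₗ LinearMap.rTensor Q I'.subtype = LinearMap.id := by
      rw [← LinearMap.rTensor_comp, hr, LinearMap.rTensor_id]
    intro a b hab
    have h2 := congrArg (LinearMap.rTensor Q r) hab
    rw [← LinearMap.comp_apply, ← LinearMap.comp_apply, this] at h2
    simpa using h2
  -- multiplication by `p^N` maps `I'` into `I`
  have hpI : ∀ x : I', (p : ℤ_[p]) ^ N • (x : P) ∈ I := by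
    intro x
    have hx : I.mkQ (x : P) ∈ Submodule.torsion ℤ_[p] (P ⧸ I) := x.2
    have := hN _ hx
    rw [← map_smul] at this
    exact (Submodule.Quotient.mk_eq_zero I).mp this
  set g : I' →ₗ[ℤ_[p]] I :=
    LinearMap.codRestrict I ((p : ℤ_[p]) ^ N • I'.subtype) (fun x => hpI x) with hgdef
  set j : I →ₗ[ℤ_[p]] I' := Submodule.inclusion hII' with hjdef
  have hgj : g ∘ₗ j = (p : ℤ_[p]) ^ N • LinearMap.id := by
    apply LinearMap.ext; intro x; apply Subtype.ext; rfl
  -- the element `y`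
  set y : I ⊗[ℤ_[p]] Q := LinearMap.rTensor Q f.rangeRestrict κ with hydef
  have hsub : I'.subtype ∘ₗ j = I.subtype := Submodule.subtype_comp_inclusion _ _ _
  have hfcomp : I.subtype ∘ₗ f.rangeRestrict = f := by ext x; rfl
  have hjy : LinearMap.rTensor Q j y = 0 := by
    apply hinj
    rw [map_zero, ← LinearMap.comp_apply, ← LinearMap.rTensor_comp, hsub, hydef,
      ← LinearMap.comp_apply, ← LinearMap.rTensor_comp, hfcomp]
    exact hκ
  have hpy : (p : ℤ_[p]) ^ N • y = 0 := by
    have : LinearMap.rTensor Q (g ∘ₗ j) y = 0 := by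
      rw [LinearMap.rTensor_comp, LinearMap.comp_apply, hjy, map_zero]
    rwa [hgj, LinearMap.rTensor_smul, LinearMap.rTensor_id, LinearMap.smul_apply,
      LinearMap.id_apply] at this
  -- exactness
  have hexact : Function.Exact (LinearMap.rTensor Q (LinearMap.ker f).subtype)
      (LinearMap.rTensor Q f.rangeRestrict) := by
    refine rTensor_exact Q ?_ f.surjective_rangeRestrict
    rw [LinearMap.exact_iff, LinearMap.ker_rangeRestrict, Submodule.range_subtype]
  have hmem : LinearMap.rTensor Q f.rangeRestrict ((p : ℤ_[p]) ^ N • κ) = 0 := by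
    rw [map_smul, ← hydef, hpy]
  rw [← LinearMap.exact_iff.mp hexact]
  exact hmem
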